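/- Define for n ≥ 2 the polynomials Q_n(z) = (1/(n+2))·(n·P_n(z) − (2/(n−1))·P_{n−1}'(z)). Then for all integers k, n ≥ 2, ∫_{−1}^{1} Q_k(z)·Q_n(z) dz = c_n·δ_{kn}, where c_n = 2n(n+1)/((n−1)(n+2)(2n+1)). -/

import Mathlib

open Polynomial MeasureTheory

noncomputable def legendre (n : ℕ) : Polynomial ℝ :=
  (2 ^ n * n.factorial : ℝ)⁻¹ • (fun p : Polynomial ℝ => p.derivative)^[n] ((X ^ 2 - 1) ^ n)

namespace LegAux

noncomputable def G (n : ℕ) : ℝ[X] := ((X : ℝ[X]) ^ 2 - 1) ^ n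

lemma legendre_eq (n : ℕ) :
    legendre n = (2 ^ n * n.factorial : ℝ)⁻¹ • (derivative^[n] (G n)) := rfl

lemma integrable_eval (p : ℝ[X]) :
    IntervalIntegrable (fun z => p.eval z) volume (-1 : ℝ) 1 :=
  (p.continuous_aeval).intervalIntegrable _ _

lemma integral_derivative (p : ℝ[X]) :
    ∫ z in (-1 : ℝ)..1, (derivative p).eval z = p.eval 1 - p.eval (-1) :=
  intervalIntegral.integral_eq_sub_of_hasDerivAt (fun x _ => p.hasDerivAt x)
    (integrable_eval _)

noncomputable def I (p q : ℝ[X]) : ℝ := ∫ z in (-1 : ℝ)..1, p.eval z * q.eval z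

lemma I_comm (p q : ℝ[X]) : I p q = I q p := by
  unfold I; simp [mul_comm]

lemma I_smul_left (a : ℝ) (p q : ℝ[X]) : I (a • p) q = a * I p q := by
  unfold I
  rw [← intervalIntegral.integral_const_mul]
  simp [mul_assoc]

lemma I_smul_right (a : ℝ) (p q : ℝ[X]) : I p (a • q) = a * I p q := by
  rw [I_comm, I_smul_left, I_comm]

lemma I_sub_left (p q r : ℝ[X]) : I (p - q) r = I p r - I q r := by
  unfold I
  rw [← intervalIntegral.integral_sub]
  · simp [sub_mul]
  · exact (((p.continuous_aeval).mul (r.continuous_aeval)).intervalIntegrable _ _)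
  · exact (((q.continuous_aeval).mul (r.continuous_aeval)).intervalIntegrable _ _)

lemma I_sub_right (p q r : ℝ[X]) : I p (q - r) = I p q - I p r := by
  rw [I_comm, I_sub_left, I_comm p q, I_comm p r]

lemma I_parts (p q : ℝ[X]) :
    I p (derivative q) =
      p.eval 1 * q.eval 1 - p.eval (-1) * q.eval (-1) - I (derivative p) q := by
  have h := integral_derivative (p * q)
  rw [derivative_mul] at h
  have h2 : ∫ z in (-1 : ℝ)..1, ((derivative p * q).eval z + (p * derivative q).eval z)
      = I (derivative p) q + I p (derivative q) := by
    rw [intervalIntegral.integral_add (integrable_eval _) (integrable_eval _)]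
    unfold I; simp
  rw [show (derivative p * q + p * derivative q).eval = fun z =>
      ((derivative p * q).eval z + (p * derivative q).eval z) from funext (by simp)] at h
  rw [h2] at h
  simp only [eval_mul] at h
  linarith

lemma dvd_iter (n : ℕ) : ∀ j, j ≤ n →
    ∃ r : ℝ[X], derivative^[j] (G n) = ((X : ℝ[X]) ^ 2 - 1) ^ (n - j) * r := by
  intro j
  induction j with
  | zero => intro _; exact ⟨1, by simp [G]⟩
  | succ j ih =>
    intro hj
    obtain ⟨r, hr⟩ := ih (by omega)
    refine ⟨((n - j : ℕ) : ℝ[X]) * (2 * X) * r + ((X : ℝ[X]) ^ 2 - 1) * derivative r, ?_⟩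
    rw [Function.iterate_succ_apply', hr, derivative_mul, derivative_pow]
    have h1 : derivative ((X : ℝ[X]) ^ 2 - 1) = C 2 * X := by
      simp [derivative_X_pow]; rw [← C_1, ← C_add]; norm_num
    rw [h1]
    have h2 : n - j = (n - (j + 1)) + 1 := by omega
    rw [h2]
    simp only [map_natCast, map_add, map_one, map_ofNat]
    push_cast
    ring

lemma eval_iter_G_one (n j : ℕ) (hj : j < n) : (derivative^[j] (G n)).eval 1 = 0 := by
  obtain ⟨r, hr⟩ := dvd_iter n j hj.le
  rw [hr]
  simp [zero_pow (by omega : n - j ≠ 0)]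

lemma eval_iter_G_neg_one (n j : ℕ) (hj : j < n) : (derivative^[j] (G n)).eval (-1) = 0 := by
  obtain ⟨r, hr⟩ := dvd_iter n j hj.le
  rw [hr]
  have : ((-1 : ℝ) ^ 2 - 1) = 0 := by norm_num
  simp [this, zero_pow (by omega : n - j ≠ 0)]

lemma parts_iter (n : ℕ) (q : ℝ[X]) : ∀ j, j ≤ n →
    I (derivative^[n] (G n)) q =
      (-1 : ℝ) ^ j * I (derivative^[n - j] (G n)) (derivative^[j] q) := by
  intro j
  induction j with
  | zero => intro _; simp
  | succ j ih =>
    intro hj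
    rw [ih (by omega)]
    have hs : n - j = (n - (j + 1)) + 1 := by omega
    have : I (derivative^[n - j] (G n)) (derivative^[j] q)
        = - I (derivative^[n - (j+1)] (G n)) (derivative^[j+1] q) := by
      rw [I_comm, hs, Function.iterate_succ_apply', I_parts,
        eval_iter_G_one n _ (by omega), eval_iter_G_neg_one n _ (by omega)]
      rw [I_comm, Function.iterate_succ_apply' (⇑derivative : ℝ[X] → ℝ[X]) j q]
      ring
    rw [this, pow_succ]
    ring

lemma orth_raw (n : ℕ) (q : ℝ[X]) (hq : q.natDegree < n) :
    I (derivative^[n] (G n)) q = 0 := by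
  rw [parts_iter n q n le_rfl, iterate_derivative_eq_zero hq]
  unfold I; simp

lemma orth (n : ℕ) (q : ℝ[X]) (hq : q.natDegree < n) : I (legendre n) q = 0 := by
  rw [legendre_eq, I_smul_left, orth_raw n q hq, mul_zero]

end LegAux

namespace LegAux

lemma natDegree_G (n : ℕ) : (G n).natDegree = 2 * n := by
  have h : ((X : ℝ[X]) ^ 2 - 1) = (X ^ 2 - C 1) := by simp
  unfold G
  rw [h, natDegree_pow, natDegree_X_pow_sub_C]
  ring

lemma monic_G (n : ℕ) : (G n).Monic := by
  have h : ((X : ℝ[X]) ^ 2 - 1) = (X ^ 2 - C 1) := by simp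
  unfold G
  rw [h]
  exact (monic_X_pow_sub_C (1 : ℝ) (by norm_num)).pow n

lemma natDegree_legendre_le (n : ℕ) : (legendre n).natDegree ≤ n := by
  rw [legendre_eq]
  refine (natDegree_smul_le _ _).trans ?_
  refine (natDegree_iterate_derivative _ _).trans ?_
  rw [natDegree_G]
  omega

lemma key_poly (n : ℕ) : derivative (X * G (n + 1)) =
    ((2 * n + 3 : ℕ) : ℝ[X]) * G (n + 1) + ((2 * n + 2 : ℕ) : ℝ[X]) * G n := by
  unfold G
  rw [derivative_mul, derivative_X, derivative_pow]
  have h1 : derivative ((X : ℝ[X]) ^ 2 - 1) = C 2 * X := by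
    simp [derivative_X_pow]; rw [← C_1, ← C_add]; norm_num
  rw [h1]
  simp only [map_natCast, map_add, map_one, map_ofNat]
  push_cast
  ring

lemma eval_G_one (n : ℕ) : (G (n + 1)).eval 1 = 0 := by simp [G]

lemma eval_G_neg_one (n : ℕ) : (G (n + 1)).eval (-1) = 0 := by
  unfold G
  simp only [eval_pow, eval_sub, eval_one, eval_X]
  norm_num

lemma intG (n : ℕ) : ∫ z in (-1 : ℝ)..1, (G n).eval z
    = (-1 : ℝ) ^ n * 2 ^ (2 * n + 1) * (n.factorial : ℝ) ^ 2 / ((2 * n + 1).factorial) := by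
  induction n with
  | zero => simp [G]; norm_num
  | succ n ih =>
    have h0 : ∫ z in (-1 : ℝ)..1, (derivative (X * G (n + 1))).eval z = 0 := by
      rw [integral_derivative]
      simp [eval_G_one, eval_G_neg_one]
    have e1 : ∀ z : ℝ, (derivative (X * G (n + 1))).eval z
        = (2 * (n : ℝ) + 3) * (G (n + 1)).eval z + (2 * (n : ℝ) + 2) * (G n).eval z := by
      intro z
      rw [key_poly]
      simp only [eval_add, eval_mul, eval_natCast]
      push_cast
      ring
    have h1 : ∫ z in (-1 : ℝ)..1, (derivative (X * G (n + 1))).eval z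
        = (2 * (n : ℝ) + 3) * (∫ z in (-1 : ℝ)..1, (G (n + 1)).eval z)
          + (2 * (n : ℝ) + 2) * (∫ z in (-1 : ℝ)..1, (G n).eval z) := by
      rw [intervalIntegral.integral_congr
        (g := fun z => (2 * (n : ℝ) + 3) * (G (n + 1)).eval z
          + (2 * (n : ℝ) + 2) * (G n).eval z) (fun z _ => e1 z)]
      rw [intervalIntegral.integral_add (f := fun z => (2 * (n : ℝ) + 3) * (G (n + 1)).eval z)
        (g := fun z => (2 * (n : ℝ) + 2) * (G n).eval z)
        ((continuous_const.mul (Polynomial.continuous _)).intervalIntegrable _ _)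
        ((continuous_const.mul (Polynomial.continuous _)).intervalIntegrable _ _),
        intervalIntegral.integral_const_mul, intervalIntegral.integral_const_mul]
    rw [h0] at h1
    have hA1 : ∫ z in (-1 : ℝ)..1, (G (n + 1)).eval z
        = -((2 * (n : ℝ) + 2) / (2 * (n : ℝ) + 3)) * ∫ z in (-1 : ℝ)..1, (G n).eval z := by
      have h3 : (2 * (n : ℝ) + 3) ≠ 0 := by positivity
      field_simp
      linarith [h1.symm]
    rw [hA1, ih]
    have hf1 : ((n + 1).factorial : ℝ) = ((n : ℝ) + 1) * (n.factorial : ℝ) := by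
      rw [Nat.factorial_succ]; push_cast; ring
    have hf2 : ((2 * (n + 1) + 1).factorial : ℝ)
        = (2 * (n : ℝ) + 3) * ((2 * (n : ℝ) + 2) * ((2 * n + 1).factorial : ℝ)) := by
      have : 2 * (n + 1) + 1 = (2 * n + 1) + 1 + 1 := by ring
      rw [this, Nat.factorial_succ, Nat.factorial_succ]
      push_cast; ring
    rw [hf1, hf2]
    have h3 : (2 * (n : ℝ) + 3) ≠ 0 := by positivity
    have h4 : (2 * (n : ℝ) + 2) ≠ 0 := by positivity
    have h5 : (((2 * n + 1).factorial : ℝ)) ≠ 0 := by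
      exact_mod_cast Nat.factorial_ne_zero _
    field_simp
    ring

lemma iter2n_G (n : ℕ) : derivative^[2 * n] (G n) = C (((2 * n).factorial : ℝ)) := by
  have h0 : (derivative^[2 * n] (G n)).natDegree ≤ 0 := by
    have h := natDegree_iterate_derivative (G n) (2 * n)
    rw [natDegree_G] at h
    omega
  rw [eq_C_of_natDegree_le_zero h0, coeff_iterate_derivative]
  have hc : (G n).coeff (0 + 2 * n) = 1 := by
    have := (monic_G n).coeff_natDegree
    rw [natDegree_G] at this
    simpa using this
  rw [hc]
  simp [Nat.descFactorial_self]

lemma norm_legendre (n : ℕ) : I (legendre n) (legendre n) = 2 / (2 * (n : ℝ) + 1) := by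
  rw [legendre_eq, I_smul_left, I_smul_right]
  rw [parts_iter n _ n le_rfl]
  have h1 : derivative^[n] (derivative^[n] (G n)) = C (((2 * n).factorial : ℝ)) := by
    rw [← Function.iterate_add_apply]
    rw [show n + n = 2 * n by ring]
    exact iter2n_G n
  rw [h1, Nat.sub_self, Function.iterate_zero_apply]
  have h2 : I (G n) (C (((2 * n).factorial : ℝ)))
      = ((2 * n).factorial : ℝ) * ∫ z in (-1 : ℝ)..1, (G n).eval z := by
    unfold I
    simp only [eval_C]
    rw [intervalIntegral.integral_mul_const]
    ring
  rw [h2, intG]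
  have hne : ((-1 : ℝ)) ^ n * ((-1 : ℝ)) ^ n = 1 := by
    rw [← mul_pow]; norm_num
  have hf : (((2 * n + 1).factorial : ℝ)) = (2 * (n : ℝ) + 1) * (((2 * n).factorial : ℝ)) := by
    rw [Nat.factorial_succ]; push_cast; ring
  have h3 : ((n.factorial : ℝ)) ≠ 0 := by exact_mod_cast Nat.factorial_ne_zero _
  have h4 : (((2 * n).factorial : ℝ)) ≠ 0 := by exact_mod_cast Nat.factorial_ne_zero _
  have h5 : (2 : ℝ) ^ n ≠ 0 := by positivity
  have h6 : (2 * (n : ℝ) + 1) ≠ 0 := by positivity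
  rw [hf]
  field_simp
  ring_nf
  rw [show ((-1 : ℝ)) ^ (n * 2) = 1 from Even.neg_one_pow ⟨n, by ring⟩]
  ring

end LegAux

namespace LegAux

lemma G_factor (n : ℕ) : G n = (((X : ℝ[X]) - 1) ^ n) * (((X : ℝ[X]) + 1) ^ n) := by
  unfold G
  rw [← mul_pow]
  congr 1
  ring

lemma iter_sub (n j : ℕ) : derivative^[j] (((X : ℝ[X]) - 1) ^ n)
    = n.descFactorial j • ((X : ℝ[X]) - 1) ^ (n - j) := by
  rw [show ((X : ℝ[X]) - 1) = X - C 1 from by rw [C_1], iterate_derivative_X_sub_pow]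

lemma iter_add (n j : ℕ) : derivative^[j] (((X : ℝ[X]) + 1) ^ n)
    = n.descFactorial j • ((X : ℝ[X]) + 1) ^ (n - j) := by
  rw [show ((X : ℝ[X]) + 1) = X + C 1 from by rw [C_1], iterate_derivative_X_add_pow]

lemma eval1_iter (n j : ℕ) (hj : j < n) :
    (derivative^[j] (((X : ℝ[X]) - 1) ^ n)).eval 1 = 0 := by
  rw [iter_sub]
  simp [zero_pow (by omega : n - j ≠ 0)]

lemma evalm1_iter (n j : ℕ) (hj : j < n) :
    (derivative^[j] (((X : ℝ[X]) + 1) ^ n)).eval (-1) = 0 := by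
  rw [iter_add]
  simp [zero_pow (by omega : n - j ≠ 0)]

lemma hfac_ne (n : ℕ) : ((n.factorial : ℝ)) ≠ 0 := by
  exact_mod_cast Nat.factorial_ne_zero _

lemma leg_eval_one (n : ℕ) : (legendre n).eval 1 = 1 := by
  rw [legendre_eq, G_factor, iterate_derivative_mul, eval_smul, eval_finset_sum]
  rw [Finset.sum_eq_single_of_mem 0 (Finset.mem_range.mpr (by omega))
    (fun k hk hk0 => by
      have hk' : k ≤ n := by simpa using Nat.lt_succ_iff.mp (Finset.mem_range.mp hk)
      simp only [eval_smul, eval_mul, smul_eq_mul, eval1_iter n (n - k) (by omega),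
        zero_mul, mul_zero, smul_zero])]
  simp only [Nat.choose_zero_right, one_smul, Nat.sub_zero, Function.iterate_zero_apply,
    iter_sub n n, Nat.sub_self, pow_zero, Nat.descFactorial_self, smul_eq_mul, mul_one,
    eval_mul, eval_natCast, eval_pow, eval_add, eval_X, eval_one, nsmul_eq_mul]
  rw [show (1 : ℝ) + 1 = 2 by norm_num]
  field_simp

lemma leg_eval_neg_one (n : ℕ) : (legendre n).eval (-1) = (-1 : ℝ) ^ n := by
  rw [legendre_eq, G_factor, iterate_derivative_mul, eval_smul, eval_finset_sum]
  rw [Finset.sum_eq_single_of_mem n (Finset.mem_range.mpr (by omega))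
    (fun k hk hkn => by
      have hk' : k ≤ n := by simpa using Nat.lt_succ_iff.mp (Finset.mem_range.mp hk)
      simp only [eval_smul, eval_mul, smul_eq_mul, evalm1_iter n k (by omega),
        zero_mul, mul_zero, smul_zero])]
  simp only [Nat.choose_self, one_smul, Nat.sub_self, Function.iterate_zero_apply,
    iter_add n n, pow_zero, Nat.descFactorial_self, smul_eq_mul, mul_one,
    eval_mul, eval_natCast, eval_pow, eval_sub, eval_X, eval_one, nsmul_eq_mul]
  rw [show (-1 : ℝ) - 1 = (-1) * 2 by norm_num, mul_pow]
  field_simp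

lemma dleg (n : ℕ) : derivative (legendre n)
    = (2 ^ n * n.factorial : ℝ)⁻¹ • derivative^[n + 1] (G n) := by
  rw [legendre_eq, derivative_smul, Function.iterate_succ_apply']

lemma dleg_eval_one (n : ℕ) (hn : 1 ≤ n) :
    (derivative (legendre n)).eval 1 = (n : ℝ) * ((n : ℝ) + 1) / 2 := by
  rw [dleg, G_factor, iterate_derivative_mul, eval_smul, eval_finset_sum]
  rw [Finset.sum_eq_single_of_mem 1 (Finset.mem_range.mpr (by omega))
    (fun k hk hk1 => by
      have hk' : k ≤ n + 1 := by simpa using Nat.lt_succ_iff.mp (Finset.mem_range.mp hk)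
      rcases Nat.eq_zero_or_pos k with hk0 | hkpos
      · subst hk0
        rw [iter_sub]
        simp [Nat.descFactorial_eq_zero_iff_lt.mpr (by omega : n < n + 1 - 0)]
      · simp only [eval_smul, eval_mul, smul_eq_mul, eval1_iter n (n + 1 - k) (by omega),
          zero_mul, mul_zero, smul_zero])]
  simp only [Nat.choose_one_right, Nat.add_sub_cancel, Function.iterate_one,
    iter_sub n n, iter_add n 1, Nat.sub_self, pow_zero, Nat.descFactorial_self,
    Nat.descFactorial_succ, Nat.descFactorial_zero, mul_one,
    eval_smul, eval_mul, eval_natCast, eval_pow, eval_add, eval_X, eval_one, smul_eq_mul,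
    nsmul_eq_mul]
  rw [show (1 : ℝ) + 1 = 2 by norm_num]
  have h2 : (2 : ℝ) ^ n = 2 * 2 ^ (n - 1) := by
    rw [← pow_succ']
    congr 1
    omega
  rw [h2]
  push_cast
  have hf := hfac_ne n
  have h5 : (2 : ℝ) ^ (n - 1) ≠ 0 := by positivity
  field_simp
  ring
  simp

lemma dleg_eval_neg_one (n : ℕ) (hn : 1 ≤ n) :
    (derivative (legendre n)).eval (-1)
      = (-1 : ℝ) ^ (n + 1) * ((n : ℝ) * ((n : ℝ) + 1) / 2) := by
  rw [dleg, G_factor, iterate_derivative_mul, eval_smul, eval_finset_sum]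
  rw [Finset.sum_eq_single_of_mem n (Finset.mem_range.mpr (by omega))
    (fun k hk hkn => by
      have hk' : k ≤ n + 1 := by simpa using Nat.lt_succ_iff.mp (Finset.mem_range.mp hk)
      rcases Nat.lt_or_ge k n with hklt | hkge
      · simp only [eval_smul, eval_mul, smul_eq_mul, evalm1_iter n k hklt,
          zero_mul, mul_zero, smul_zero]
      · have hk1 : k = n + 1 := by omega
        subst hk1
        rw [iter_add]
        simp [Nat.descFactorial_eq_zero_iff_lt.mpr (by omega : n < n + 1)])]
  simp only [Nat.choose_succ_self_right, Function.iterate_one,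
    iter_sub n (n + 1 - n), iter_add n n, Nat.sub_self, pow_zero,
    Nat.descFactorial_self, smul_eq_mul, mul_one,
    eval_smul, eval_mul, eval_natCast, eval_pow, eval_sub, eval_X, eval_one, nsmul_eq_mul]
  rw [show n + 1 - n = 1 by omega]
  simp only [Nat.descFactorial_succ, Nat.descFactorial_zero, mul_one]
  rw [show (-1 : ℝ) - 1 = (-1) * 2 by norm_num, mul_pow]
  have h2 : (2 : ℝ) ^ n = 2 * 2 ^ (n - 1) := by
    rw [← pow_succ']
    congr 1
    omega
  have h3 : (-1 : ℝ) ^ (n + 1) = (-1) ^ (n - 1) := by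
    rw [show n + 1 = (n - 1) + 2 by omega, pow_add]
    norm_num
  rw [h2, h3]
  push_cast
  have hf := hfac_ne n
  have h5 : (2 : ℝ) ^ (n - 1) ≠ 0 := by positivity
  field_simp
  ring
  simp

end LegAux

namespace LegAux

lemma orth' (n : ℕ) (q : ℝ[X]) (hq : q.natDegree < n) : I q (legendre n) = 0 := by
  rw [I_comm]; exact orth n q hq

lemma H1 (k n : ℕ) (h : k < n) : I (legendre k) (legendre n) = 0 :=
  orth' n _ (lt_of_le_of_lt (natDegree_legendre_le k) h)

lemma deg_dleg (m : ℕ) : (derivative (legendre m)).natDegree ≤ m - 1 :=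
  le_trans (natDegree_derivative_le _) (Nat.sub_le_sub_right (natDegree_legendre_le m) 1)

lemma H3 (m n : ℕ) (hm : m ≤ n) (hn : 1 ≤ n) :
    I (derivative (legendre m)) (legendre n) = 0 :=
  orth' n _ (lt_of_le_of_lt (deg_dleg m) (by omega))

lemma H4 (a b : ℕ) (hab : a ≤ b) (hb : 1 ≤ b) :
    I (legendre a) (derivative (legendre b)) = 1 - (-1 : ℝ) ^ (a + b) := by
  rw [I_parts, leg_eval_one, leg_eval_one, leg_eval_neg_one, leg_eval_neg_one,
    H3 a b hab hb, ← pow_add]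
  ring

lemma H4' (a b : ℕ) (hb : b ≤ a) (ha : 1 ≤ a) :
    I (legendre a) (derivative (legendre b)) = 0 :=
  orth a _ (lt_of_le_of_lt (deg_dleg b) (by omega))

lemma H5 (a b : ℕ) (hab : a ≤ b) (ha : 1 ≤ a) :
    I (derivative (legendre a)) (derivative (legendre b))
      = ((a : ℝ) * ((a : ℝ) + 1) / 2) * (1 + (-1 : ℝ) ^ (a + b)) := by
  rw [I_parts, dleg_eval_one a ha, dleg_eval_neg_one a ha, leg_eval_one, leg_eval_neg_one]
  have hdd : I (derivative (derivative (legendre a))) (legendre b) = 0 := by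
    refine orth' b _ (lt_of_le_of_lt ?_ (show a - 2 < b by omega))
    exact le_trans (natDegree_derivative_le _) (Nat.sub_le_sub_right (deg_dleg a) 1)
  rw [hdd, pow_succ, pow_add]
  ring

noncomputable def Qp (m : ℕ) : ℝ[X] :=
  (1 / ((m : ℝ) + 2)) • ((m : ℝ) • legendre m
    - (2 / ((m : ℝ) - 1)) • derivative (legendre (m - 1)))

lemma I_Qp_diag (n : ℕ) (hn : 2 ≤ n) :
    I (Qp n) (Qp n) = 2 * (n : ℝ) * ((n : ℝ) + 1)
      / (((n : ℝ) - 1) * ((n : ℝ) + 2) * (2 * (n : ℝ) + 1)) := by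
  have hc : ((n - 1 : ℕ) : ℝ) = (n : ℝ) - 1 := by
    rw [Nat.cast_sub (by omega), Nat.cast_one]
  simp only [Qp, I_smul_left, I_smul_right, I_sub_left, I_sub_right]
  rw [norm_legendre n, H4' n (n - 1) (by omega) (by omega),
    H3 (n - 1) n (by omega) (by omega),
    H5 (n - 1) (n - 1) le_rfl (by omega)]
  rw [show ((-1 : ℝ)) ^ ((n - 1) + (n - 1)) = 1 from Even.neg_one_pow ⟨n - 1, rfl⟩, hc]
  have h1 : (n : ℝ) - 1 ≠ 0 := by
    have : (2 : ℝ) ≤ (n : ℝ) := by exact_mod_cast hn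
    linarith
  have h2 : (n : ℝ) + 2 ≠ 0 := by positivity
  have h3 : 2 * (n : ℝ) + 1 ≠ 0 := by positivity
  field_simp
  ring

lemma I_Qp_lt (k n : ℕ) (hk : 2 ≤ k) (hkn : k < n) : I (Qp k) (Qp n) = 0 := by
  have hck : ((k - 1 : ℕ) : ℝ) = (k : ℝ) - 1 := by
    rw [Nat.cast_sub (by omega), Nat.cast_one]
  simp only [Qp, I_smul_left, I_smul_right, I_sub_left, I_sub_right]
  rw [H1 k n hkn, H4 k (n - 1) (by omega) (by omega),
    H3 (k - 1) n (by omega) (by omega),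
    H5 (k - 1) (n - 1) (by omega) (by omega)]
  have e1 : ((-1 : ℝ)) ^ (k + (n - 1)) = -((-1 : ℝ)) ^ ((k - 1) + (n - 1)) := by
    rw [show k + (n - 1) = ((k - 1) + (n - 1)) + 1 by omega, pow_succ]
    ring
  rw [e1, hck]
  have h1 : (k : ℝ) - 1 ≠ 0 := by
    have : (2 : ℝ) ≤ (k : ℝ) := by exact_mod_cast hk
    linarith
  have h1' : ((n : ℝ) - 1) ≠ 0 := by
    have : (2 : ℝ) ≤ (n : ℝ) := by exact_mod_cast (by omega : 2 ≤ n)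
    linarith
  field_simp
  ring

end LegAux

open LegAux
theorem tilde_legendre_orthogonal (k n : ℕ) (hk : 2 ≤ k) (hn : 2 ≤ n) :
    ∫ z in (-1 : ℝ)..1,
        ((1 / ((k : ℝ) + 2)) * ((k : ℝ) * (legendre k).eval z
            - (2 / ((k : ℝ) - 1)) * (legendre (k - 1)).derivative.eval z))
          * ((1 / ((n : ℝ) + 2)) * ((n : ℝ) * (legendre n).eval z
            - (2 / ((n : ℝ) - 1)) * (legendre (n - 1)).derivative.eval z))
      = if k = n then 2 * (n : ℝ) * ((n : ℝ) + 1) / (((n : ℝ) - 1) * ((n : ℝ) + 2) * (2 * (n : ℝ) + 1))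
        else 0 := by
  have hbridge : (∫ z in (-1 : ℝ)..1,
        ((1 / ((k : ℝ) + 2)) * ((k : ℝ) * (legendre k).eval z
            - (2 / ((k : ℝ) - 1)) * (legendre (k - 1)).derivative.eval z))
          * ((1 / ((n : ℝ) + 2)) * ((n : ℝ) * (legendre n).eval z
            - (2 / ((n : ℝ) - 1)) * (legendre (n - 1)).derivative.eval z)))
      = I (Qp k) (Qp n) := by
    unfold I
    refine intervalIntegral.integral_congr fun z _ => ?_
    simp [Qp, smul_eq_mul]
  rw [hbridge]
  rcases lt_trichotomy k n with h | h | h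
  · rw [if_neg (by omega), I_Qp_lt k n hk h]
  · subst h
    rw [if_pos rfl, I_Qp_diag k hk]
  · rw [if_neg (by omega), I_comm, I_Qp_lt n k hn h]
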